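/- If x ∈ GL₆(𝕂) has rank matrix R(x) = [[2,2],[2,2]] (i.e., the lower right 4×4, 4×2, 2×4 and 2×2 corner blocks of x all have rank 2), then x·x_left does not belong to Lie(P)·x + x·Lie(P)^τ. -/

import Mathlib

open Matrix

/-- The Lie algebra of the parabolic `P ⊆ GL₆(𝕂)`: block upper triangular `6 × 6`
matrices with respect to the partition `(2,2,2)` of `6`. -/
def LieP (𝕂 : Type*) [RCLike 𝕂] : Set (Matrix (Fin 6) (Fin 6) 𝕂) :=
  {p | ∀ i j : Fin 6, (j : ℕ) / 2 < (i : ℕ) / 2 → p i j = 0}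

/-- `Lie(P)^τ`, the image of `Lie(P)` under matrix transpose. -/
def LiePtau (𝕂 : Type*) [RCLike 𝕂] : Set (Matrix (Fin 6) (Fin 6) 𝕂) :=
  {q | qᵀ ∈ LieP 𝕂}

/-- The block matrix `x_left = [[0,I₂,0],[0,0,I₂],[0,0,0]]` (2×2 blocks). -/
def xLeft (𝕂 : Type*) [RCLike 𝕂] : Matrix (Fin 6) (Fin 6) 𝕂 :=
  Matrix.of fun i j => if (j : ℕ) = (i : ℕ) + 2 then 1 else 0

/-- `x_right = x_left^τ`. -/
def xRight (𝕂 : Type*) [RCLike 𝕂] : Matrix (Fin 6) (Fin 6) 𝕂 := (xLeft 𝕂)ᵀ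

/-- The set `Lie(P)·x + x·Lie(P)^τ = {p·x + x·q : p ∈ Lie(P), q ∈ Lie(P)^τ}`. -/
def tanSet {𝕂 : Type*} [RCLike 𝕂] (x : Matrix (Fin 6) (Fin 6) 𝕂) :
    Set (Matrix (Fin 6) (Fin 6) 𝕂) :=
  {m | ∃ p ∈ LieP 𝕂, ∃ q ∈ LiePtau 𝕂, m = p * x + x * q}

/-- The lower right `i × j` corner block of a `6 × 6` matrix. -/
def corner {𝕂 : Type*} [RCLike 𝕂] (i j : ℕ) (hi : i ≤ 6) (hj : j ≤ 6)
    (x : Matrix (Fin 6) (Fin 6) 𝕂) : Matrix (Fin i) (Fin j) 𝕂 :=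
  Matrix.of fun a b =>
    x ⟨6 - i + a.1, by have := a.2; omega⟩ ⟨6 - j + b.1, by have := b.2; omega⟩

/-- The rank matrix `R(x) = [[r₄ₓ₄(x), r₄ₓ₂(x)], [r₂ₓ₄(x), r₂ₓ₂(x)]]`, where
`r_{i×j}(x)` is the rank of the lower right `i × j` corner block of `x`. -/
noncomputable def rankMatrix {𝕂 : Type*} [RCLike 𝕂] (x : Matrix (Fin 6) (Fin 6) 𝕂) :
    Matrix (Fin 2) (Fin 2) ℕ :=
  !![(corner 4 4 (by norm_num) (by norm_num) x).rank,
     (corner 4 2 (by norm_num) (by norm_num) x).rank;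
     (corner 2 4 (by norm_num) (by norm_num) x).rank,
     (corner 2 2 (by norm_num) (by norm_num) x).rank]

section Helpers

variable {𝕂 : Type*} [RCLike 𝕂]

private def emb3 : Fin 3 → Fin 2 → Fin 6 := ![![0,1],![2,3],![4,5]]

private def blk (i j : Fin 3) (x : Matrix (Fin 6) (Fin 6) 𝕂) :
    Matrix (Fin 2) (Fin 2) 𝕂 := x.submatrix (emb3 i) (emb3 j)

private lemma blk_mul (i j : Fin 3) (m n : Matrix (Fin 6) (Fin 6) 𝕂) :
    blk i j (m * n) = blk i 0 m * blk 0 j n + blk i 1 m * blk 1 j n + blk i 2 m * blk 2 j n := by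
  ext a b
  simp only [blk, submatrix_apply, Matrix.mul_apply, Matrix.add_apply, Fin.sum_univ_six, Fin.sum_univ_two]
  simp [emb3]
  ring

private lemma blk_add (i j : Fin 3) (m n : Matrix (Fin 6) (Fin 6) 𝕂) :
    blk i j (m + n) = blk i j m + blk i j n := rfl

private lemma blk_p_zero {p : Matrix (Fin 6) (Fin 6) 𝕂} (hp : p ∈ LieP 𝕂)
    {i j : Fin 3} (h : (j : ℕ) < (i : ℕ)) : blk i j p = 0 := by
  ext a b
  simp only [blk, submatrix_apply, Matrix.zero_apply]
  refine hp _ _ ?_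
  fin_cases i <;> fin_cases j <;> fin_cases a <;> fin_cases b <;>
    simp_all [emb3] <;> omega

private lemma blk_q_zero {q : Matrix (Fin 6) (Fin 6) 𝕂} (hq : q ∈ LiePtau 𝕂)
    {i j : Fin 3} (h : (i : ℕ) < (j : ℕ)) : blk i j q = 0 := by
  ext a b
  simp only [blk, submatrix_apply, Matrix.zero_apply]
  have := hq (emb3 j b) (emb3 i a)
  simp only [transpose_apply] at this
  refine this ?_
  fin_cases i <;> fin_cases j <;> fin_cases a <;> fin_cases b <;>
    simp_all [emb3] <;> omega

private lemma blk_xLeft_one (i : Fin 3) (x : Matrix (Fin 6) (Fin 6) 𝕂) :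
    blk i 1 (x * xLeft 𝕂) = blk i 0 x := by
  ext a b
  fin_cases b <;>
    simp [blk, emb3, xLeft, Matrix.mul_apply, Fin.sum_univ_six,
      show ((2:Fin 6):ℕ) = 2 from rfl, show ((3:Fin 6):ℕ) = 3 from rfl,
      show ((4:Fin 6):ℕ) = 4 from rfl, show ((5:Fin 6):ℕ) = 5 from rfl]

private lemma blk_xLeft_two (i : Fin 3) (x : Matrix (Fin 6) (Fin 6) 𝕂) :
    blk i 2 (x * xLeft 𝕂) = blk i 1 x := by
  ext a b
  fin_cases b <;>
    simp [blk, emb3, xLeft, Matrix.mul_apply, Fin.sum_univ_six,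
      show ((2:Fin 6):ℕ) = 2 from rfl, show ((3:Fin 6):ℕ) = 3 from rfl,
      show ((4:Fin 6):ℕ) = 4 from rfl, show ((5:Fin 6):ℕ) = 5 from rfl]

private lemma isUnit_det_of_rank_two (A : Matrix (Fin 2) (Fin 2) 𝕂) (h : A.rank = 2) :
    IsUnit A.det := by
  by_contra hdet
  have hdet0 : A.det = 0 := by simpa [isUnit_iff_ne_zero] using hdet
  obtain ⟨v, hv, hAv⟩ := Matrix.exists_mulVec_eq_zero_iff.mpr hdet0
  have hker : v ∈ LinearMap.ker A.mulVecLin := by simpa using hAv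
  have hrn := LinearMap.finrank_range_add_finrank_ker A.mulVecLin
  have hfr : Module.finrank 𝕂 (Fin 2 → 𝕂) = 2 := Module.finrank_fin_fun 𝕂
  have h' : Module.finrank 𝕂 (LinearMap.range A.mulVecLin) = 2 := h
  have hker_pos : 0 < Module.finrank 𝕂 (LinearMap.ker A.mulVecLin) := by
    rw [Module.finrank_pos_iff]
    exact nontrivial_of_ne ⟨v, hker⟩ 0 (by simpa [Subtype.ext_iff] using hv)
  omega

end Helpers

/-- If `x ∈ GL₆(𝕂)` has rank matrix `R(x) = [[2,2],[2,2]]`, then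
`x·x_left ∉ Lie(P)·x + x·Lie(P)^τ`. -/
theorem xLeft_transversal_of_rankMatrix_two {𝕂 : Type*} [RCLike 𝕂]
    (x : Matrix (Fin 6) (Fin 6) 𝕂) (hx : IsUnit x.det)
    (hR : rankMatrix x = !![2, 2; 2, 2]) :
    x * xLeft 𝕂 ∉ tanSet x := by
  rintro ⟨p, hp, q, hq, heq⟩
  have hall := Matrix.ext_iff.mpr hR
  have h44 : (corner 4 4 (by norm_num) (by norm_num) x).rank = 2 := by
    simpa [rankMatrix] using hall 0 0
  have h24 : (corner 2 4 (by norm_num) (by norm_num) x).rank = 2 := by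
    simpa [rankMatrix] using hall 1 0
  have h22 : (corner 2 2 (by norm_num) (by norm_num) x).rank = 2 := by
    simpa [rankMatrix] using hall 1 1
  -- corners as submatrices
  set g4 : Fin 4 → Fin 6 := ![2,3,4,5] with hg4
  set g2 : Fin 2 → Fin 6 := ![4,5] with hg2
  have hW : corner 4 4 (by norm_num) (by norm_num) x = x.submatrix g4 g4 := by
    ext a b; fin_cases a <;> fin_cases b <;> rfl
  have hB : corner 2 4 (by norm_num) (by norm_num) x = x.submatrix g2 g4 := by
    ext a b; fin_cases a <;> fin_cases b <;> rfl
  have hK22 : corner 2 2 (by norm_num) (by norm_num) x = blk 2 2 x := by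
    ext a b; fin_cases a <;> fin_cases b <;> rfl
  set W : Matrix (Fin 4) (Fin 4) 𝕂 := x.submatrix g4 g4 with hWdef
  set B : Matrix (Fin 2) (Fin 4) 𝕂 := x.submatrix g2 g4 with hBdef
  -- K invertible
  have hK : IsUnit (blk 2 2 x).det := by
    apply isUnit_det_of_rank_two
    rw [← hK22]; exact h22
  -- row span argument
  have hrW : W.rank = 2 := by rw [← hW]; exact h44
  have hrB : B.rank = 2 := by rw [← hB]; exact h24
  have hsub : Set.range B ⊆ Set.range W := by
    rintro v ⟨a, rfl⟩
    refine ⟨![2,3] a, ?_⟩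
    fin_cases a <;> rfl
  have hle : Submodule.span 𝕂 (Set.range B) ≤ Submodule.span 𝕂 (Set.range W) :=
    Submodule.span_mono hsub
  have hfinW : Module.finrank 𝕂 (Submodule.span 𝕂 (Set.range W)) = 2 := by
    have := Matrix.rank_eq_finrank_span_row W; rw [hrW] at this; exact this.symm
  have hfinB : Module.finrank 𝕂 (Submodule.span 𝕂 (Set.range B)) = 2 := by
    have := Matrix.rank_eq_finrank_span_row B; rw [hrB] at this; exact this.symm
  have hspan_eq : Submodule.span 𝕂 (Set.range B) = Submodule.span 𝕂 (Set.range W) :=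
    Submodule.eq_of_le_of_finrank_le hle (by rw [hfinW, hfinB])
  have hrangeB : Set.range B = {B 0, B 1} := by
    ext v
    constructor
    · rintro ⟨a, rfl⟩; fin_cases a <;> simp
    · rintro (rfl | rfl)
      exacts [⟨0, rfl⟩, ⟨1, rfl⟩]
  have hmem : ∀ a : Fin 2, W (![0,1] a) ∈ Submodule.span 𝕂 ({B 0, B 1} : Set (Fin 4 → 𝕂)) := by
    intro a
    rw [← hrangeB, hspan_eq]
    exact Submodule.subset_span ⟨![0,1] a, rfl⟩
  obtain ⟨c0, d0, hc0⟩ := Submodule.mem_span_pair.mp (hmem 0)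
  obtain ⟨c1, d1, hc1⟩ := Submodule.mem_span_pair.mp (hmem 1)
  set M : Matrix (Fin 2) (Fin 2) 𝕂 := !![c0, d0; c1, d1] with hM
  have hrow0 : ∀ j : Fin 4, x 2 (g4 j) = c0 * x 4 (g4 j) + d0 * x 5 (g4 j) := by
    intro j
    have := congrFun hc0 j
    simpa [W, B, g4, g2] using this.symm
  have hrow1 : ∀ j : Fin 4, x 3 (g4 j) = c1 * x 4 (g4 j) + d1 * x 5 (g4 j) := by
    intro j
    have := congrFun hc1 j
    simpa [W, B, g4, g2] using this.symm
  have hE : blk 1 1 x = M * blk 2 1 x := by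
    ext a b
    fin_cases a <;> fin_cases b <;>
      simp [blk, emb3, hM, Matrix.mul_apply, Fin.sum_univ_two, -Matrix.submatrix_cons_row]
    · simpa [g4] using hrow0 0
    · simpa [g4] using hrow0 1
    · simpa [g4] using hrow1 0
    · simpa [g4] using hrow1 1
  have hF : blk 1 2 x = M * blk 2 2 x := by
    ext a b
    fin_cases a <;> fin_cases b <;>
      simp [blk, emb3, hM, Matrix.mul_apply, Fin.sum_univ_two, -Matrix.submatrix_cons_row]
    · simpa [g4] using hrow0 2
    · simpa [g4] using hrow0 3
    · simpa [g4] using hrow1 2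
    · simpa [g4] using hrow1 3
  -- block equations from heq
  set P1 := blk 1 1 p; set P2 := blk 1 2 p; set P3 := blk 2 2 p
  set Q1 := blk 1 1 q; set Q2 := blk 2 1 q; set Q3 := blk 2 2 q
  set D := blk 1 0 x; set E := blk 1 1 x; set F := blk 1 2 x
  set G := blk 2 0 x; set H := blk 2 1 x; set K := blk 2 2 x
  have hp10 : blk 1 0 p = 0 := blk_p_zero hp (by norm_num)
  have hp20 : blk 2 0 p = 0 := blk_p_zero hp (by norm_num)
  have hp21 : blk 2 1 p = 0 := blk_p_zero hp (by norm_num)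
  have hq01 : blk 0 1 q = 0 := blk_q_zero hq (by norm_num)
  have hq02 : blk 0 2 q = 0 := blk_q_zero hq (by norm_num)
  have hq12 : blk 1 2 q = 0 := blk_q_zero hq (by norm_num)
  have eqD : D = P1 * E + P2 * H + (E * Q1 + F * Q2) := by
    have h := congrArg (blk (1 : Fin 3) 1) heq
    rw [blk_xLeft_one, blk_add, blk_mul, blk_mul, hp10, hq01] at h
    simpa using h
  have eqA : E = P1 * F + P2 * K + F * Q3 := by
    have h := congrArg (blk (1 : Fin 3) 2) heq
    rw [blk_xLeft_two, blk_add, blk_mul, blk_mul, hp10, hq02, hq12] at h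
    simpa using h
  have eqB : H = P3 * K + K * Q3 := by
    have h := congrArg (blk (2 : Fin 3) 2) heq
    rw [blk_xLeft_two, blk_add, blk_mul, blk_mul, hp20, hp21, hq02, hq12] at h
    simpa using h
  have eqC : G = P3 * H + (H * Q1 + K * Q2) := by
    have h := congrArg (blk (2 : Fin 3) 1) heq
    rw [blk_xLeft_one, blk_add, blk_mul, blk_mul, hp20, hp21, hq01] at h
    simpa using h
  -- algebra
  have h1 : (P1 * M + P2 - M * P3) * K = 0 := by
    calc (P1 * M + P2 - M * P3) * K
        = (P1 * F + P2 * K + F * Q3) - M * (P3 * K + K * Q3) := by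
          rw [hF]; noncomm_ring
      _ = E - M * H := by rw [← eqA, ← eqB]
      _ = 0 := by rw [hE, sub_self]
  have h2 : P1 * M + P2 - M * P3 = 0 := by
    have h3 := congrArg (· * K⁻¹) h1
    simpa [Matrix.mul_assoc, Matrix.mul_nonsing_inv _ hK] using h3
  have hD : D = M * G := by
    calc D = P1 * E + P2 * H + (E * Q1 + F * Q2) := eqD
      _ = (P1 * M + P2 - M * P3) * H + M * (P3 * H + (H * Q1 + K * Q2)) := by
          rw [hE, hF]; noncomm_ring
      _ = M * G := by rw [h2, ← eqC]; simp
  -- build left kernel vector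
  have hrow : ∀ j : Fin 6, x 2 j = M 0 0 * x 4 j + M 0 1 * x 5 j := by
    have hDe := Matrix.ext_iff.mpr hD
    have hEe := Matrix.ext_iff.mpr hE
    have hFe := Matrix.ext_iff.mpr hF
    intro j
    fin_cases j
    · simpa [blk, emb3, D, G, Matrix.mul_apply, Fin.sum_univ_two, -Matrix.submatrix_cons_row] using hDe 0 0
    · simpa [blk, emb3, D, G, Matrix.mul_apply, Fin.sum_univ_two, -Matrix.submatrix_cons_row] using hDe 0 1
    · simpa [blk, emb3, E, H, Matrix.mul_apply, Fin.sum_univ_two, -Matrix.submatrix_cons_row] using hEe 0 0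
    · simpa [blk, emb3, E, H, Matrix.mul_apply, Fin.sum_univ_two, -Matrix.submatrix_cons_row] using hEe 0 1
    · simpa [blk, emb3, F, K, Matrix.mul_apply, Fin.sum_univ_two, -Matrix.submatrix_cons_row] using hFe 0 0
    · simpa [blk, emb3, F, K, Matrix.mul_apply, Fin.sum_univ_two, -Matrix.submatrix_cons_row] using hFe 0 1
  set u : Fin 6 → 𝕂 := ![0, 0, 1, 0, -(M 0 0), -(M 0 1)] with hu
  have huv : u ᵥ* x = 0 := by
    funext j
    have := hrow j
    simp [Matrix.vecMul, dotProduct, Fin.sum_univ_six, hu,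
      show (![0, 0, 1, 0, -(M 0 0), -(M 0 1)] : Fin 6 → 𝕂) 5 = -(M 0 1) from rfl]
    linear_combination this
  have hu0 : u = 0 := by
    have h1 : u ᵥ* (x * x⁻¹) = u := by
      rw [Matrix.mul_nonsing_inv _ hx, Matrix.vecMul_one]
    rw [← Matrix.vecMul_vecMul, huv, Matrix.zero_vecMul] at h1
    exact h1.symm
  have h12 := congrFun hu0 2
  rw [hu] at h12
  simp at h12
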